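/- Let φ: (0,∞) → [0,∞) be C¹ and nondecreasing with ∫₁^∞ φ(t)/t² dt < ∞. Then |q''(y)| = (4y/π)∫₀^∞ tφ'(t)/(t²+y²)² dt ≤ (24/(π y)) ∫_y^∞ φ(t)/t² dt for all y ≥ 1. -/

import Mathlib

open Set Filter MeasureTheory Topology

set_option maxHeartbeats 1000000 in
theorem stmt7 (φ φ' : ℝ → ℝ)
    (hderiv : ∀ t ∈ Ioi (0:ℝ), HasDerivAt φ (φ' t) t)
    (hcont : ContinuousOn φ' (Ioi 0))
    (hnonneg : ∀ t ∈ Ioi (0:ℝ), 0 ≤ φ t)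
    (hmono : MonotoneOn φ (Ioi 0))
    (hint : IntegrableOn (fun t => φ t / t ^ 2) (Ioi 1))
    (hint' : ∀ y > (0:ℝ), IntegrableOn (fun t => t * φ' t / (t ^ 2 + y ^ 2) ^ 2) (Ioi 0)) :
    ∀ y ≥ (1:ℝ),
      (4 * y / Real.pi) * ∫ t in Ioi (0:ℝ), t * φ' t / (t ^ 2 + y ^ 2) ^ 2
        ≤ (24 / (Real.pi * y)) * ∫ t in Ioi y, φ t / t ^ 2 := by
  intro y hy
  have hy0 : (0:ℝ) < y := lt_of_lt_of_le one_pos hy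
  set f : ℝ → ℝ := fun t => t * φ' t / (t ^ 2 + y ^ 2) ^ 2 with hfdef
  -- nonnegativity of the derivative
  have hφ'nonneg : ∀ t ∈ Ioi (0:ℝ), 0 ≤ φ' t := by
    intro t ht
    have hs := hasDerivAt_iff_tendsto_slope.mp (hderiv t ht)
    have hs' : Tendsto (slope φ t) (𝓝[>] t) (𝓝 (φ' t)) :=
      hs.mono_left (nhdsWithin_mono t fun s hst => mem_compl_singleton_iff.mpr (ne_of_gt hst))
    refine ge_of_tendsto hs' ?_
    filter_upwards [self_mem_nhdsWithin] with s hst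
    have h0s : (0:ℝ) < s := lt_trans ht hst
    have hφts : φ t ≤ φ s := hmono ht h0s (le_of_lt hst)
    rw [slope_def_field]
    exact div_nonneg (sub_nonneg.2 hφts) (sub_nonneg.2 (le_of_lt hst))
  have hfi : IntegrableOn f (Ioi 0) := hint' y hy0
  set I := ∫ t in Ioi y, φ t / t ^ 2 with hIdef
  have hInonneg : 0 ≤ I := setIntegral_nonneg measurableSet_Ioi fun t ht =>
    div_nonneg (hnonneg t (lt_trans hy0 ht)) (by positivity)
  have hint_y : IntegrableOn (fun t => φ t / t ^ 2) (Ioi y) :=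
    hint.mono_set (Ioi_subset_Ioi hy)
  -- splitting the integral
  have hsplit : ∫ t in Ioi (0:ℝ), f t = (∫ t in Ioc 0 y, f t) + ∫ t in Ioi y, f t := by
    rw [← setIntegral_union (Ioc_disjoint_Ioi le_rfl) measurableSet_Ioi
        (hfi.mono_set Ioc_subset_Ioi_self) (hfi.mono_set (Ioi_subset_Ioi hy0.le)),
        Ioc_union_Ioi_eq_Ioi hy0.le]
  -- Part C : integral over (0, y]
  have hC : ∫ t in Ioc (0:ℝ) y, f t ≤ φ y / y ^ 3 := by
    set s : ℕ → Set ℝ := fun n => Ioc (y / (n + 2)) y with hsdef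
    have hsm : ∀ n, MeasurableSet (s n) := fun n => measurableSet_Ioc
    have hmo : Monotone s := by
      intro m n hmn
      apply Ioc_subset_Ioc_left
      have hc : ((m:ℝ) + 2) ≤ (n:ℝ) + 2 := by exact_mod_cast Nat.add_le_add_right hmn 2
      exact div_le_div_of_nonneg_left hy0.le (by positivity) hc
    have hU : ⋃ n, s n = Ioc (0:ℝ) y := by
      ext t
      simp only [hsdef, mem_iUnion, mem_Ioc]
      constructor
      · rintro ⟨n, h1, h2⟩
        exact ⟨lt_trans (by positivity) h1, h2⟩
      · rintro ⟨h1, h2⟩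
        obtain ⟨n, hn⟩ := exists_nat_gt (y / t)
        refine ⟨n, ?_, h2⟩
        rw [div_lt_iff₀ (by positivity)]
        rw [div_lt_iff₀ h1] at hn
        nlinarith
    have htend := tendsto_setIntegral_of_monotone hsm hmo
      (hU ▸ hfi.mono_set Ioc_subset_Ioi_self)
    rw [hU] at htend
    refine le_of_tendsto htend (Eventually.of_forall fun n => ?_)
    set ε : ℝ := y / (n + 2) with hεdef
    have hε0 : (0:ℝ) < ε := by positivity
    have hεy : ε ≤ y := by
      rw [hεdef, div_le_iff₀ (by positivity)]
      nlinarith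
    have hIcc : Icc ε y ⊆ Ioi (0:ℝ) := fun t ht => lt_of_lt_of_le hε0 ht.1
    have hcφ' : ContinuousOn φ' (Icc ε y) := hcont.mono hIcc
    have hcf : ContinuousOn f (Icc ε y) := by
      apply ContinuousOn.div
      · exact (continuousOn_id.mul hcφ')
      · fun_prop
      · intro t ht
        have : (0:ℝ) < t := hIcc ht
        positivity
    have hif : IntervalIntegrable f volume ε y := by
      apply ContinuousOn.intervalIntegrable
      rwa [uIcc_of_le hεy]
    have hib : IntervalIntegrable (fun t => φ' t / y ^ 3) volume ε y := by
      apply ContinuousOn.intervalIntegrable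
      rw [uIcc_of_le hεy]
      exact hcφ'.div_const _
    have hiφ' : IntervalIntegrable φ' volume ε y := by
      apply ContinuousOn.intervalIntegrable
      rwa [uIcc_of_le hεy]
    have step1 : ∫ t in Ioc ε y, f t = ∫ t in ε..y, f t :=
      (intervalIntegral.integral_of_le hεy).symm
    have step2 : (∫ t in ε..y, f t) ≤ ∫ t in ε..y, φ' t / y ^ 3 := by
      apply intervalIntegral.integral_mono_on hεy hif hib
      intro t ht
      have ht0 : (0:ℝ) < t := hIcc ht
      have hφ't : 0 ≤ φ' t := hφ'nonneg t ht0
      have h1 : t * φ' t ≤ y * φ' t := mul_le_mul_of_nonneg_right ht.2 hφ't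
      have h2 : (y ^ 2) ^ 2 ≤ (t ^ 2 + y ^ 2) ^ 2 := by nlinarith
      calc t * φ' t / (t ^ 2 + y ^ 2) ^ 2 ≤ y * φ' t / (y ^ 2) ^ 2 :=
            div_le_div₀ (by positivity) h1 (by positivity) h2
        _ = φ' t / y ^ 3 := by field_simp
    have step3 : (∫ t in ε..y, φ' t / y ^ 3) = (φ y - φ ε) / y ^ 3 := by
      rw [intervalIntegral.integral_div]
      congr 1
      apply intervalIntegral.integral_eq_sub_of_hasDerivAt
      · intro t ht
        rw [uIcc_of_le hεy] at ht
        exact hderiv t (hIcc ht)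
      · exact hiφ'
    have step4 : (φ y - φ ε) / y ^ 3 ≤ φ y / y ^ 3 := by
      have hφε := hnonneg ε hε0
      apply div_le_div_of_nonneg_right ?_ (by positivity)
      linarith
    calc ∫ t in s n, f t = ∫ t in ε..y, f t := step1
      _ ≤ ∫ t in ε..y, φ' t / y ^ 3 := step2
      _ = (φ y - φ ε) / y ^ 3 := step3
      _ ≤ φ y / y ^ 3 := step4
  -- integrabilities on (y, ∞)
  have h1 : IntegrableOn f (Ioi y) := hfi.mono_set (Ioi_subset_Ioi hy0.le)
  have h2 : IntegrableOn (fun t => φ' t / t ^ 3) (Ioi y) := by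
    apply Integrable.mono' (h1.const_mul 4)
    · exact ((hcont.mono (Ioi_subset_Ioi hy0.le)).div
        (by fun_prop) (fun t ht => by
          have : (0:ℝ) < t := lt_trans hy0 ht
          positivity)).aestronglyMeasurable measurableSet_Ioi
    · filter_upwards [ae_restrict_mem measurableSet_Ioi] with t ht
      have hyt : y < t := ht
      have ht0 : (0:ℝ) < t := lt_trans hy0 hyt
      have hφ't : 0 ≤ φ' t := hφ'nonneg t ht0
      rw [Real.norm_eq_abs, abs_of_nonneg (by positivity)]
      have hy2t2 : y ^ 2 ≤ t ^ 2 := by nlinarith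
      have hden : (t ^ 2 + y ^ 2) ^ 2 ≤ 4 * t ^ 4 := by
        nlinarith [mul_le_mul_of_nonneg_left hy2t2 (sq_nonneg t),
          mul_self_le_mul_self (sq_nonneg y) hy2t2]
      calc φ' t / t ^ 3 = 4 * (t * φ' t / (4 * t ^ 4)) := by field_simp
        _ ≤ 4 * (t * φ' t / (t ^ 2 + y ^ 2) ^ 2) := by
            apply mul_le_mul_of_nonneg_left ?_ (by norm_num)
            exact div_le_div_of_nonneg_left (by positivity) (by positivity) hden
        _ = 4 * f t := rfl
  have h3 : IntegrableOn (fun t => 3 * φ t / t ^ 4) (Ioi y) := by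
    apply Integrable.mono' (hint_y.const_mul (3 / y ^ 2))
    · have hcφ : ContinuousOn φ (Ioi 0) := fun t ht =>
        (hderiv t ht).continuousAt.continuousWithinAt
      exact ((continuousOn_const.mul (hcφ.mono (Ioi_subset_Ioi hy0.le))).div
        (by fun_prop) (fun t ht => by
          have : (0:ℝ) < t := lt_trans hy0 ht
          positivity)).aestronglyMeasurable measurableSet_Ioi
    · filter_upwards [ae_restrict_mem measurableSet_Ioi] with t ht
      have hyt : y < t := ht
      have ht0 : (0:ℝ) < t := lt_trans hy0 hyt
      have hφt : 0 ≤ φ t := hnonneg t ht0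
      rw [Real.norm_eq_abs, abs_of_nonneg (by positivity)]
      have hsq : y ^ 2 ≤ t ^ 2 := by nlinarith
      have h2t : y ^ 2 * t ^ 2 ≤ t ^ 4 := by nlinarith [mul_le_mul_of_nonneg_right hsq (sq_nonneg t)]
      calc 3 * φ t / t ^ 4 ≤ 3 * φ t / (y ^ 2 * t ^ 2) :=
            div_le_div_of_nonneg_left (by positivity) (by positivity) h2t
        _ = 3 / y ^ 2 * (φ t / t ^ 2) := by
            field_simp
            all_goals ring
  have hsub : IntegrableOn (fun t => φ' t / t ^ 3 - 3 * φ t / t ^ 4) (Ioi y) := h2.sub h3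
  -- derivative of φ t / t ^ 3
  have hgderiv : ∀ t ∈ Ioi y, HasDerivAt (fun u => φ u / u ^ 3)
      (φ' t / t ^ 3 - 3 * φ t / t ^ 4) t := by
    intro t ht
    have ht0 : (0:ℝ) < t := lt_trans hy0 ht
    have h := (hderiv t ht0).div (hasDerivAt_pow 3 t) (by positivity)
    refine h.congr_deriv ?_
    have ht3 : t ≠ 0 := ht0.ne'
    field_simp
    ring
  -- tail of the integral of φ/t² tends to 0
  have hT0 : Tendsto (fun b => ∫ t in Ioi b, φ t / t ^ 2) atTop (𝓝 0) := by
    have A := intervalIntegral_tendsto_integral_Ioi (1:ℝ) hint tendsto_id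
    have B : Tendsto (fun b => (∫ t in Ioi (1:ℝ), φ t / t ^ 2) - ∫ t in (1:ℝ)..b, φ t / t ^ 2)
        atTop (𝓝 0) := by
      have := (tendsto_const_nhds :
        Tendsto (fun _ : ℝ => ∫ t in Ioi (1:ℝ), φ t / t ^ 2) atTop _).sub A
      simpa using this
    refine B.congr' ?_
    filter_upwards [eventually_ge_atTop (1:ℝ)] with b hb
    have hsp : ∫ t in Ioi (1:ℝ), φ t / t ^ 2
        = (∫ t in Ioc 1 b, φ t / t ^ 2) + ∫ t in Ioi b, φ t / t ^ 2 := by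
      rw [← setIntegral_union (Ioc_disjoint_Ioi le_rfl) measurableSet_Ioi
          (hint.mono_set Ioc_subset_Ioi_self) (hint.mono_set (Ioi_subset_Ioi hb)),
          Ioc_union_Ioi_eq_Ioi hb]
    rw [intervalIntegral.integral_of_le hb, hsp]
    ring
  -- φ b / b ≤ tail b for b ≥ 1
  have htail : ∀ b : ℝ, 1 ≤ b → φ b / b ≤ ∫ t in Ioi b, φ t / t ^ 2 := by
    intro b hb
    have hb0 : (0:ℝ) < b := lt_of_lt_of_le one_pos hb
    have hrint : IntegrableOn (fun t : ℝ => t ^ (-2:ℝ)) (Ioi b) :=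
      integrableOn_Ioi_rpow_of_lt (by norm_num) hb0
    have hconst : IntegrableOn (fun t : ℝ => φ b / t ^ 2) (Ioi b) := by
      apply IntegrableOn.congr_fun (hrint.const_mul (φ b)) ?_ measurableSet_Ioi
      intro t ht
      dsimp only
      have ht0 : (0:ℝ) < t := lt_trans hb0 ht
      rw [show (-2:ℝ) = -(2:ℕ) by norm_num, Real.rpow_neg ht0.le, Real.rpow_natCast]
      rw [div_eq_mul_inv]
    have hmonoI : (∫ t in Ioi b, φ b / t ^ 2) ≤ ∫ t in Ioi b, φ t / t ^ 2 := by
      apply setIntegral_mono_on hconst (hint.mono_set (Ioi_subset_Ioi hb)) measurableSet_Ioi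
      intro t ht
      have ht0 : (0:ℝ) < t := lt_trans hb0 ht
      gcongr
      exact hmono hb0 ht0 (le_of_lt ht)
    have hval : (∫ t in Ioi b, φ b / t ^ 2) = φ b / b := by
      have e1 : (∫ t in Ioi b, φ b / t ^ 2) = φ b * ∫ t in Ioi b, t ^ (-2:ℝ) := by
        rw [← integral_const_mul]
        apply setIntegral_congr_fun measurableSet_Ioi
        intro t ht
        dsimp only
        have ht0 : (0:ℝ) < t := lt_trans hb0 ht
        rw [show (-2:ℝ) = -(2:ℕ) by norm_num, Real.rpow_neg ht0.le, Real.rpow_natCast]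
        rw [div_eq_mul_inv]
      rw [e1, integral_Ioi_rpow_of_lt (by norm_num) hb0]
      norm_num
      rw [Real.rpow_neg_one, div_eq_mul_inv]
    rw [← hval]
    exact hmonoI
  -- φ b / b³ → 0
  have hT : Tendsto (fun b => φ b / b ^ 3) atTop (𝓝 0) := by
    apply tendsto_of_tendsto_of_tendsto_of_le_of_le' tendsto_const_nhds hT0
    · filter_upwards [eventually_ge_atTop (1:ℝ)] with b hb
      have hb0 : (0:ℝ) < b := lt_of_lt_of_le one_pos hb
      exact div_nonneg (hnonneg b hb0) (by positivity)
    · filter_upwards [eventually_ge_atTop (1:ℝ)] with b hb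
      have hb0 : (0:ℝ) < b := lt_of_lt_of_le one_pos hb
      have h1b : 1 ≤ b ^ 2 := by nlinarith
      have hb3 : b ≤ b ^ 3 := by nlinarith [mul_le_mul_of_nonneg_left h1b hb0.le]
      have : φ b / b ^ 3 ≤ φ b / b :=
        div_le_div_of_nonneg_left (hnonneg b hb0) hb0 hb3
      exact this.trans (htail b hb)
  -- integration by parts on (y, ∞)
  have hE : ∫ t in Ioi y, (φ' t / t ^ 3 - 3 * φ t / t ^ 4) = 0 - φ y / y ^ 3 := by
    apply integral_Ioi_of_hasDerivAt_of_tendsto ?_ hgderiv hsub hT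
    exact (((hderiv y hy0).continuousAt).div (by fun_prop) (by positivity)).continuousWithinAt
  have hE' : ∫ t in Ioi y, φ' t / t ^ 3
      = (0 - φ y / y ^ 3) + ∫ t in Ioi y, 3 * φ t / t ^ 4 := by
    rw [← hE, ← integral_add hsub h3]
    congr 1
    funext t
    ring
  have hE3 : (∫ t in Ioi y, 3 * φ t / t ^ 4) ≤ 3 / y ^ 2 * I := by
    have : (∫ t in Ioi y, 3 * φ t / t ^ 4) ≤ ∫ t in Ioi y, 3 / y ^ 2 * (φ t / t ^ 2) := by
      apply setIntegral_mono_on h3 (hint_y.const_mul _) measurableSet_Ioi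
      intro t ht
      have ht0 : (0:ℝ) < t := lt_trans hy0 ht
      have hφt : 0 ≤ φ t := hnonneg t ht0
      have hyt : y ≤ t := le_of_lt ht
      have hsq : y ^ 2 ≤ t ^ 2 := by nlinarith
      have h2t : y ^ 2 * t ^ 2 ≤ t ^ 4 := by nlinarith [mul_le_mul_of_nonneg_right hsq (sq_nonneg t)]
      calc 3 * φ t / t ^ 4 ≤ 3 * φ t / (y ^ 2 * t ^ 2) :=
            div_le_div_of_nonneg_left (by positivity) (by positivity) h2t
        _ = 3 / y ^ 2 * (φ t / t ^ 2) := by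
            field_simp
            all_goals ring
    rwa [integral_const_mul] at this
  have hfle : ∀ t ∈ Ioi y, f t ≤ φ' t / t ^ 3 := by
    intro t ht
    have ht0 : (0:ℝ) < t := lt_trans hy0 ht
    have hφ't : 0 ≤ φ' t := hφ'nonneg t ht0
    have hden : (t ^ 2) ^ 2 ≤ (t ^ 2 + y ^ 2) ^ 2 := by nlinarith
    calc t * φ' t / (t ^ 2 + y ^ 2) ^ 2 ≤ t * φ' t / (t ^ 2) ^ 2 :=
          div_le_div_of_nonneg_left (mul_nonneg ht0.le hφ't) (by positivity) hden
      _ = φ' t / t ^ 3 := by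
          field_simp
          all_goals ring
  have hEineq : (∫ t in Ioi y, f t) ≤ (0 - φ y / y ^ 3) + 3 / y ^ 2 * I := by
    calc (∫ t in Ioi y, f t) ≤ ∫ t in Ioi y, φ' t / t ^ 3 :=
          setIntegral_mono_on h1 h2 measurableSet_Ioi hfle
      _ = (0 - φ y / y ^ 3) + ∫ t in Ioi y, 3 * φ t / t ^ 4 := hE'
      _ ≤ (0 - φ y / y ^ 3) + 3 / y ^ 2 * I := by linarith [hE3]
  have key : (∫ t in Ioi (0:ℝ), f t) ≤ 3 / y ^ 2 * I := by
    rw [hsplit]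
    linarith [hC, hEineq]
  -- conclusion
  have hπ := Real.pi_pos
  have hlhs : 4 * y / Real.pi * ∫ t in Ioi (0:ℝ), f t ≤ 4 * y / Real.pi * (3 / y ^ 2 * I) := by
    apply mul_le_mul_of_nonneg_left key
    positivity
  refine hlhs.trans ?_
  have e0 : 4 * y / Real.pi * (3 / y ^ 2 * I) = 12 * I / (Real.pi * y) := by
    field_simp
    ring
  rw [e0, div_mul_eq_mul_div, div_le_div_iff₀ (by positivity) (by positivity)]
  nlinarith [mul_nonneg (mul_nonneg hInonneg hπ.le) hy0.le]
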